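/- Let G be a loopless multigraph on a finite vertex set V, let t ≥ 0 be an integer, and let H be the t-core of G. If μ_H(u,v) ≤ t+1 for all u,v ∈ V, and the simple graph B on V in which u and v are adjacent exactly when μ_H(u,v) = t+1 admits a full B-queue, then χ'(G) ≤ Δ(G) + t. -/

import Mathlib

structure Multigraph (V : Type*) where
  mu : V → V → ℕ
  symm : ∀ u v, mu u v = mu v u
  loopless : ∀ v, mu v v = 0

namespace Multigraph

variable {V : Type*} [Fintype V]

/-- The degree of a vertex: number of incident edges. -/
def deg (G : Multigraph V) (v : V) : ℕ := ∑ u, G.mu v u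

/-- The maximum degree Δ(G). -/
def maxDeg (G : Multigraph V) : ℕ := Finset.univ.sup (deg G)

/-- The local multiplicity μ_G(v). -/
def locMult (G : Multigraph V) (v : V) : ℕ := Finset.univ.sup (G.mu v)

end Multigraph

namespace Multigraph

variable {V : Type*} [Fintype V]

/-- A proper k-edge-colouring: a decomposition of μ_G into k symmetric {0,1}-valued
matchings. -/
def IsEdgeColoring (G : Multigraph V) (k : ℕ) (M : Fin k → V → V → ℕ) : Prop :=
  (∀ i u v, M i u v = M i v u) ∧
  (∀ i u v, M i u v ≤ 1) ∧
  (∀ i v, ∑ u, M i v u ≤ 1) ∧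
  (∀ u v, ∑ i, M i u v = G.mu u v)

/-- The chromatic index χ'(G): least k admitting a proper k-edge-colouring. -/
noncomputable def chromaticIndex (G : Multigraph V) : ℕ :=
  sInf { k | ∃ M, IsEdgeColoring G k M }

end Multigraph

namespace Multigraph

variable {V : Type*} [Fintype V]

/-- The t-core of G : induced submultigraph on the vertices v with
d_G(v) + μ_G(v) > Δ(G) + t. -/
def tCore (G : Multigraph V) (t : ℕ) : Multigraph V where
  mu u v := if (maxDeg G + t < deg G u + locMult G u) ∧
               (maxDeg G + t < deg G v + locMult G v) then G.mu u v else 0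
  symm u v := by
    try dsimp only
    by_cases h : (maxDeg G + t < deg G u + locMult G u) ∧
        (maxDeg G + t < deg G v + locMult G v)
    · rw [if_pos h, if_pos ⟨h.2, h.1⟩, G.symm]
    · rw [if_neg h, if_neg fun h' => h ⟨h'.2, h'.1⟩]
  loopless v := by
    try dsimp only
    split <;> simp [G.loopless]

end Multigraph

/-- A full B-queue for a finite simple graph B: distinct vertices u_1, …, u_q and
sets S_0 = ∅, S_1, …, S_q = V(B) with S_i = N(u_i) ∪ {u_i} ∪ S_{i−1},
1 ≤ |S_i \ S_{i−1}| ≤ 2 and |S_i \ (S_{i−1} ∪ {u_i})| ≤ 1 for each i. -/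
def HasFullBQueue {V : Type*} [Fintype V] (B : SimpleGraph V) : Prop :=
  ∃ (q : ℕ) (u : ℕ → V) (S : ℕ → Set V),
    (∀ i j, i < q → j < q → u i = u j → i = j) ∧
    S 0 = ∅ ∧
    (∀ i < q, S (i + 1) = B.neighborSet (u i) ∪ {u i} ∪ S i) ∧
    (∀ i < q, 1 ≤ (S (i + 1) \ S i).ncard ∧ (S (i + 1) \ S i).ncard ≤ 2) ∧
    (∀ i < q, (S (i + 1) \ (S i ∪ {u i})).ncard ≤ 1) ∧
    S q = Set.univ



set_option linter.unusedSectionVars false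

namespace BQ
open Finset

variable {V : Type*} [Fintype V] [DecidableEq V] {k : ℕ}

structure PC (k : ℕ) (m : V → V → ℕ) (c : V → V → Finset (Fin k)) : Prop where
  symm : ∀ u v, c u v = c v u
  card : ∀ u v, (c u v).card = m u v
  disj : ∀ v u u', u ≠ u' → Disjoint (c v u) (c v u')

def used (c : V → V → Finset (Fin k)) (v : V) : Finset (Fin k) :=
  Finset.univ.biUnion (fun u => c v u)

def freeC (c : V → V → Finset (Fin k)) (v : V) : Finset (Fin k) :=
  Finset.univ \ used c v

def dm (m : V → V → ℕ) (v : V) : ℕ := ∑ u, m v u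

def Colorable (k : ℕ) (m : V → V → ℕ) : Prop := ∃ c : V → V → Finset (Fin k), PC k m c

lemma mem_used {c : V → V → Finset (Fin k)} {v : V} {β : Fin k} :
    β ∈ used c v ↔ ∃ u, β ∈ c v u := by simp [used]

lemma mem_free {c : V → V → Finset (Fin k)} {v : V} {β : Fin k} :
    β ∈ freeC c v ↔ ∀ u, β ∉ c v u := by simp [freeC, mem_used]

lemma card_used {m : V → V → ℕ} {c : V → V → Finset (Fin k)} (h : PC k m c) (v : V) :
    (used c v).card = dm m v := by
  rw [used, Finset.card_biUnion (fun u _ u' _ huu => h.disj v u u' huu)]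
  simp [dm, h.card]

lemma card_free {m : V → V → ℕ} {c : V → V → Finset (Fin k)} (h : PC k m c) (v : V) :
    (freeC c v).card = k - dm m v := by
  rw [freeC, Finset.card_sdiff_of_subset (Finset.subset_univ _), card_used h, Finset.card_univ,
    Fintype.card_fin]

lemma used_le_k {m : V → V → ℕ} {c : V → V → Finset (Fin k)} (h : PC k m c) (v : V) :
    dm m v ≤ k := by
  rw [← card_used h]
  simpa using Finset.card_le_card (Finset.subset_univ (used c v))

lemma card_free' {m : V → V → ℕ} {c : V → V → Finset (Fin k)} (h : PC k m c) (v : V) :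
    ((freeC c v).card : ℤ) = (k : ℤ) - dm m v := by
  rw [card_free h]
  have := used_le_k h v
  omega

lemma free_nonempty {m : V → V → ℕ} {c : V → V → Finset (Fin k)} (h : PC k m c) (v : V)
    (hlt : dm m v < k) : (freeC c v).Nonempty := by
  rw [← Finset.card_pos, card_free h]; omega

lemma row_unique {m : V → V → ℕ} {c : V → V → Finset (Fin k)} (h : PC k m c) {v u u' : V}
    {β : Fin k} (h1 : β ∈ c v u) (h2 : β ∈ c v u') : u = u' := by
  by_contra hne
  exact Finset.disjoint_left.1 (h.disj v u u' hne) h1 h2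

/-- `m` with one edge between `x` and `y` removed. -/
def decP (m : V → V → ℕ) (x y : V) : V → V → ℕ :=
  fun u v => if (u = x ∧ v = y) ∨ (u = y ∧ v = x) then m u v - 1 else m u v

lemma decP_le (m : V → V → ℕ) (x y u v : V) : decP m x y u v ≤ m u v := by
  unfold decP; split <;> omega

lemma decP_eq_of_ne {m : V → V → ℕ} {x y u v : V} (h : ¬((u = x ∧ v = y) ∨ (u = y ∧ v = x))) :
    decP m x y u v = m u v := if_neg h

lemma decP_xy {m : V → V → ℕ} {x y : V} (hxy : x ≠ y) : decP m x y x y = m x y - 1 := by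
  simp [decP]

lemma decP_symm {m : V → V → ℕ} (hm : ∀ u v, m u v = m v u) (x y : V) :
    ∀ u v, decP m x y u v = decP m x y v u := by
  intro u v
  unfold decP
  by_cases h : (u = x ∧ v = y) ∨ (u = y ∧ v = x)
  · rw [if_pos h, if_pos (by tauto), hm]
  · rw [if_neg h, if_neg (by tauto), hm]

lemma dm_decP {m : V → V → ℕ} {x y : V} (hxy : x ≠ y) (hm : ∀ u v, m u v = m v u)
    (h1 : 1 ≤ m x y) (v : V) :
    dm (decP m x y) v = dm m v - (if v = x ∨ v = y then 1 else 0) := by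
  have hind : ∀ (w : V), (∑ u, if u = w then 1 else 0) = 1 := by
    intro w
    rw [Finset.sum_ite_eq' Finset.univ w (fun _ => 1), if_pos (Finset.mem_univ w)]
  by_cases hv : v = x ∨ v = y
  · rw [if_pos hv]
    have key : dm (decP m x y) v + 1 = dm m v := by
      rcases hv with hv | hv
    
      · subst hv
        have hpt : ∀ u, decP m v y v u + (if u = y then 1 else 0) = m v u := by
          intro u
          by_cases hu : u = y
          · subst hu; rw [decP_xy hxy, if_pos rfl]; omega
          · rw [if_neg hu, decP_eq_of_ne (by tauto)]; omega
        unfold dm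
        rw [← hind y, ← Finset.sum_add_distrib]
        exact Finset.sum_congr rfl fun u _ => hpt u
      · subst hv
        have h1' : 1 ≤ m v x := le_of_le_of_eq h1 (hm x v)
        have hpt : ∀ u, decP m x v v u + (if u = x then 1 else 0) = m v u := by
          intro u
          by_cases hu : u = x
          · subst hu
            have hd : decP m u v v u = m v u - 1 := by simp [decP, hxy.symm, Ne.symm hxy]
            rw [hd, if_pos rfl]
            have : 1 ≤ m v u := le_of_le_of_eq h1 (hm u v)
            omega
          · rw [if_neg hu, decP_eq_of_ne (by tauto)]; omega
        unfold dm
        rw [← hind x, ← Finset.sum_add_distrib]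
        exact Finset.sum_congr rfl fun u _ => hpt u
    omega
  · rw [if_neg hv]
    push_neg at hv
    refine Finset.sum_congr rfl fun u _ => decP_eq_of_ne ?_
    rintro (⟨h, -⟩ | ⟨h, -⟩) <;> [exact hv.1 h; exact hv.2 h]

/-- update the colour sets of the pair `(x,y)` (both orders) to `s`. -/
def setP (c : V → V → Finset (Fin k)) (x y : V) (s : Finset (Fin k)) : V → V → Finset (Fin k) :=
  fun u v => if u = x ∧ v = y then s else if u = y ∧ v = x then s else c u v

lemma setP_xy {c : V → V → Finset (Fin k)} {x y : V} {s : Finset (Fin k)} :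
    setP c x y s x y = s := by simp [setP]

lemma setP_yx {c : V → V → Finset (Fin k)} {x y : V} {s : Finset (Fin k)} :
    setP c x y s y x = s := by
  unfold setP
  by_cases h : y = x ∧ x = y
  · rw [if_pos h]
  · rw [if_neg h, if_pos ⟨rfl, rfl⟩]

lemma setP_eq_of_ne {c : V → V → Finset (Fin k)} {x y u v : V} {s : Finset (Fin k)}
    (h : ¬((u = x ∧ v = y) ∨ (u = y ∧ v = x))) : setP c x y s u v = c u v := by
  unfold setP
  rw [if_neg (fun hc => h (Or.inl hc)), if_neg (fun hc => h (Or.inr hc))]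

lemma setP_symm {c : V → V → Finset (Fin k)} (hc : ∀ u v, c u v = c v u) {x y : V}
    {s : Finset (Fin k)} : ∀ u v, setP c x y s u v = setP c x y s v u := by
  intro u v
  by_cases h : (u = x ∧ v = y) ∨ (u = y ∧ v = x)
  · rcases h with ⟨h1, h2⟩ | ⟨h1, h2⟩ <;> subst h1 <;> subst h2 <;> rw [setP_xy, setP_yx]
  · rw [setP_eq_of_ne h, setP_eq_of_ne (by tauto), hc]

end BQ

namespace BQ
open Finset
variable {V : Type*} [Fintype V] [DecidableEq V] {k : ℕ}

section Mutations

variable {m : V → V → ℕ} {c : V → V → Finset (Fin k)} {x y : V} {β : Fin k}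

lemma PC_add' {M : V → V → ℕ} (hc : PC k M c) (hm : ∀ u v, m u v = m v u) (hxy : x ≠ y)
    (hMxy : M x y + 1 = m x y)
    (hMoff : ∀ u v, ¬((u = x ∧ v = y) ∨ (u = y ∧ v = x)) → M u v = m u v)
    (hfx : β ∈ freeC c x) (hfy : β ∈ freeC c y) :
    PC k m (setP c x y (insert β (c x y))) := by
  have hrowx : ∀ w, setP c x y (insert β (c x y)) x w =
      if w = y then insert β (c x y) else c x w := by
    intro w
    by_cases hw : w = y
    · subst hw; rw [if_pos rfl, setP_xy]
    · rw [if_neg hw, setP_eq_of_ne (by tauto)]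
  have hrowy : ∀ w, setP c x y (insert β (c x y)) y w =
      if w = x then insert β (c x y) else c y w := by
    intro w
    by_cases hw : w = x
    · subst hw; rw [if_pos rfl, setP_yx]
    · rw [if_neg hw, setP_eq_of_ne (by rintro (⟨h, -⟩ | ⟨-, h⟩) <;> [exact hxy h.symm; exact hw h])]
  have hrowo : ∀ v w, v ≠ x → v ≠ y → setP c x y (insert β (c x y)) v w = c v w := by
    intro v w hvx hvy
    exact setP_eq_of_ne (by tauto)
  have hβxy : β ∉ c x y := mem_free.1 hfx y
  constructor
  · exact setP_symm hc.symm
  · intro u v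
    by_cases h : (u = x ∧ v = y) ∨ (u = y ∧ v = x)
    · rcases h with ⟨h1', h2⟩ | ⟨h1', h2⟩
      · rw [h1', h2, setP_xy, Finset.card_insert_of_notMem hβxy, hc.card]
        exact hMxy
      · rw [h1', h2, setP_yx, Finset.card_insert_of_notMem hβxy, hc.card]
        have hmx := hm x y
        omega
    · rw [setP_eq_of_ne h, hc.card, hMoff u v h]
  · intro v u u' hne
    rw [Finset.disjoint_left]
    intro γ hγu hγu'
    by_cases hvx : v = x
    · subst hvx
      rw [hrowx] at hγu hγu'
      by_cases hu : u = y <;> by_cases hu' : u' = y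
      · exact hne (hu.trans hu'.symm)
      · rw [if_pos hu] at hγu
        rw [if_neg hu'] at hγu'
        rcases Finset.mem_insert.1 hγu with rfl | hγ
        · exact (mem_free.1 hfx u') hγu'
        · exact hne (hu.trans (row_unique hc hγ hγu'))
      · rw [if_neg hu] at hγu
        rw [if_pos hu'] at hγu'
        rcases Finset.mem_insert.1 hγu' with rfl | hγ
        · exact (mem_free.1 hfx u) hγu
        · exact hne ((row_unique hc hγu hγ).trans hu'.symm)
      · rw [if_neg hu] at hγu
        rw [if_neg hu'] at hγu'
        exact hne (row_unique hc hγu hγu')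
    · by_cases hvy : v = y
      · subst hvy
        rw [hrowy] at hγu hγu'
        have hcyx : c x v = c v x := hc.symm x v
        by_cases hu : u = x <;> by_cases hu' : u' = x
        · exact hne (hu.trans hu'.symm)
        · rw [if_pos hu] at hγu
          rw [if_neg hu'] at hγu'
          rcases Finset.mem_insert.1 hγu with rfl | hγ
          · exact (mem_free.1 hfy u') hγu'
          · rw [hcyx] at hγ
            exact hne (hu.trans (row_unique hc hγ hγu'))
        · rw [if_neg hu] at hγu
          rw [if_pos hu'] at hγu'
          rcases Finset.mem_insert.1 hγu' with rfl | hγ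
          · exact (mem_free.1 hfy u) hγu
          · rw [hcyx] at hγ
            exact hne ((row_unique hc hγu hγ).trans hu'.symm)
        · rw [if_neg hu] at hγu
          rw [if_neg hu'] at hγu'
          exact hne (row_unique hc hγu hγu')
      · rw [hrowo v u hvx hvy] at hγu
        rw [hrowo v u' hvx hvy] at hγu'
        exact hne (row_unique hc hγu hγu')

lemma setP_erase_subset {s : Finset (Fin k)} (hcs : ∀ u v, c u v = c v u) (hs : s ⊆ c x y) :
    ∀ u v, setP c x y s u v ⊆ c u v := by
  intro u v
  by_cases h : (u = x ∧ v = y) ∨ (u = y ∧ v = x)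
  · rcases h with ⟨h1, h2⟩ | ⟨h1, h2⟩
    · rw [h1, h2, setP_xy]; exact hs
    · rw [h1, h2, setP_yx, hcs y x]; exact hs
  · rw [setP_eq_of_ne h]

lemma PC_del (hc : PC k m c) (hm : ∀ u v, m u v = m v u) (hxy : x ≠ y) (hβ : β ∈ c x y) :
    PC k (decP m x y) (setP c x y ((c x y).erase β)) := by
  constructor
  · exact setP_symm hc.symm
  · intro u v
    by_cases h : (u = x ∧ v = y) ∨ (u = y ∧ v = x)
    · rcases h with ⟨h1, h2⟩ | ⟨h1, h2⟩
      · subst h1; subst h2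
        rw [setP_xy, Finset.card_erase_of_mem hβ, hc.card, decP_xy hxy]
      · rw [h1, h2, setP_yx, Finset.card_erase_of_mem hβ, hc.card,
          show decP m x y y x = m y x - 1 from if_pos (Or.inr ⟨rfl, rfl⟩), hm x y]
    · rw [setP_eq_of_ne h, hc.card, decP_eq_of_ne h]
  · intro v u u' hne
    have hsub := setP_erase_subset (c := c) (x := x) (y := y) hc.symm (Finset.erase_subset β (c x y))
    exact ((hc.disj v u u' hne).mono (hsub v u) (hsub v u'))

end Mutations
end BQ

namespace BQ
open Finset
variable {V : Type*} [Fintype V] [DecidableEq V] {k : ℕ}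

lemma PC_add {m : V → V → ℕ} {c : V → V → Finset (Fin k)} {x y : V} {β : Fin k}
    (hc : PC k (decP m x y) c) (hm : ∀ u v, m u v = m v u) (hxy : x ≠ y)
    (h1 : 1 ≤ m x y) (hfx : β ∈ freeC c x) (hfy : β ∈ freeC c y) :
    PC k m (setP c x y (insert β (c x y))) :=
  PC_add' hc hm hxy (by rw [decP_xy hxy]; omega) (fun u v h => decP_eq_of_ne h) hfx hfy

lemma used_mono {c₁ c₂ : V → V → Finset (Fin k)} {v : V}
    (h : ∀ w, c₁ v w ⊆ c₂ v w) : used c₁ v ⊆ used c₂ v := by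
  intro γ hγ
  rcases mem_used.1 hγ with ⟨w, hw⟩
  exact mem_used.2 ⟨w, h w hw⟩

lemma free_antimono {c₁ c₂ : V → V → Finset (Fin k)} {v : V}
    (h : used c₂ v ⊆ used c₁ v) : freeC c₁ v ⊆ freeC c₂ v :=
  Finset.sdiff_subset_sdiff (le_refl _) h

/-- One step of moving the uncoloured edge from `(x,a)` to `(x,b)`:
`β` is on the edge `(x,b)` and free at `a`. -/
lemma shift_step {m : V → V → ℕ} {c : V → V → Finset (Fin k)} {x a b : V} {β : Fin k}
    (hm : ∀ u v, m u v = m v u) (hc : PC k (decP m x a) c)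
    (hxa : x ≠ a) (hxb : x ≠ b) (hab : a ≠ b)
    (h1 : 1 ≤ m x a) (hβb : β ∈ c x b) (hβa : β ∈ freeC c a) :
    ∃ c₂ : V → V → Finset (Fin k), PC k (decP m x b) c₂ ∧ used c₂ x = used c x ∧
      (∀ v, v ≠ a → freeC c v ⊆ freeC c₂ v) ∧ 1 ≤ m x b ∧
      (∀ w, w ≠ a → w ≠ b → c₂ x w = c x w) := by
  have hnb : ¬((x = x ∧ a = b) ∨ (x = b ∧ a = x)) := by
    rintro (⟨-, h⟩ | ⟨h, -⟩) <;> [exact hab h; exact hxb h]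
  have hna : ¬((x = x ∧ b = a) ∨ (x = a ∧ b = x)) := by
    rintro (⟨-, h⟩ | ⟨h, -⟩) <;> [exact hab h.symm; exact hxa h]
  have h1b : 1 ≤ m x b := by
    have : (c x b).card = m x b := by
      rw [hc.card, decP_eq_of_ne hna]
    rw [← this]
    exact Finset.card_pos.2 ⟨β, hβb⟩
  set inner := setP c x b ((c x b).erase β) with hinner
  have hcdel : PC k (decP (decP m x a) x b) inner :=
    PC_del hc (decP_symm hm x a) hxb hβb
  have hinner_xa : inner x a = c x a := setP_eq_of_ne hnb
  have hinner_xb : inner x b = (c x b).erase β := setP_xy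
  have hinner_other : ∀ w, w ≠ a → w ≠ b → inner x w = c x w := by
    intro w hwa hwb
    exact setP_eq_of_ne (by rintro (⟨-, h⟩ | ⟨h, -⟩) <;> [exact hwb h; exact hxb h])
  have hinner_xw : ∀ w, w ≠ b → inner x w = c x w := by
    intro w hwb
    exact setP_eq_of_ne (by rintro (⟨-, h⟩ | ⟨h, -⟩) <;> [exact hwb h; exact hxb h])
  -- β is free at x and at a in `inner`
  have hfx : β ∈ freeC inner x := by
    rw [mem_free]
    intro w
    by_cases hwb : w = b
    · rw [hwb, hinner_xb]
      exact Finset.notMem_erase β _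
    · rw [hinner_xw w hwb]
      intro hmem
      exact hwb (row_unique hc hmem hβb)
  have hfa : β ∈ freeC inner a := by
    rw [mem_free]
    intro w
    have : inner a w = c a w := by
      refine setP_eq_of_ne ?_
      rintro (⟨h, -⟩ | ⟨h, -⟩) <;> [exact hxa h.symm; exact hab h]
    rw [this]
    exact mem_free.1 hβa w
  -- add β back on the pair (x,a)
  have hMxy : decP (decP m x a) x b x a + 1 = decP m x b x a := by
    have e1 : decP (decP m x a) x b x a = decP m x a x a := decP_eq_of_ne hnb
    have e2 : decP m x b x a = m x a := decP_eq_of_ne hnb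
    rw [e1, e2, decP_xy hxa]
    omega
  have hMoff : ∀ u v, ¬((u = x ∧ v = a) ∨ (u = a ∧ v = x)) →
      decP (decP m x a) x b u v = decP m x b u v := by
    intro u v h
    by_cases hb : (u = x ∧ v = b) ∨ (u = b ∧ v = x)
    · simp only [decP, if_pos hb, if_neg h]
    · rw [decP_eq_of_ne hb, decP_eq_of_ne h, decP_eq_of_ne hb]
  have houter : PC k (decP m x b) (setP inner x a (insert β (inner x a))) :=
    PC_add' hcdel (decP_symm hm x b) hxa hMxy hMoff hfx hfa
  set c₂ := setP inner x a (insert β (inner x a)) with hc2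
  have hc2row : ∀ w, w ≠ a → c₂ x w = inner x w := by
    intro w hwa
    exact setP_eq_of_ne (by rintro (⟨-, h⟩ | ⟨h, -⟩) <;> [exact hwa h; exact hxa h])
  have hc2xa : c₂ x a = insert β (c x a) := by
    rw [hc2, setP_xy, hinner_xa]
  have hux : used c₂ x = used c x := by
    ext γ
    rw [mem_used, mem_used]
    constructor
    · rintro ⟨w, hw⟩
      by_cases hwa : w = a
      · rw [hwa, hc2xa] at hw
        rcases Finset.mem_insert.1 hw with rfl | hγ
        · exact ⟨b, hβb⟩
        · exact ⟨a, hγ⟩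
      · rw [hc2row w hwa] at hw
        by_cases hwb : w = b
        · rw [hwb, hinner_xb] at hw
          exact ⟨b, Finset.mem_of_mem_erase hw⟩
        · rw [hinner_xw w hwb] at hw
          exact ⟨w, hw⟩
    · rintro ⟨w, hw⟩
      by_cases hwa : w = a
      · refine ⟨a, ?_⟩
        rw [hc2xa]
        exact Finset.mem_insert_of_mem (hwa ▸ hw)
      · by_cases hwb : w = b
        · by_cases hγβ : γ = β
          · refine ⟨a, ?_⟩
            rw [hc2xa, hγβ]
            exact Finset.mem_insert_self _ _
          · refine ⟨b, ?_⟩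
            rw [hc2row b hab.symm, hinner_xb]
            exact Finset.mem_erase.2 ⟨hγβ, hwb ▸ hw⟩
        · refine ⟨w, ?_⟩
          rw [hc2row w hwa, hinner_xw w hwb]
          exact hw
  refine ⟨c₂, houter, hux, ?_, h1b, ?_⟩
  swap
  · intro w hwa hwb
    rw [hc2row w hwa, hinner_other w hwa hwb]
  intro v hva
  apply free_antimono
  by_cases hvx : v = x
  · rw [hvx, hux]
  · -- v ≠ x, v ≠ a : each entry of row v is contained in the old one
    apply used_mono
    intro w
    have e1 : c₂ v w = inner v w := by
      refine setP_eq_of_ne ?_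
      rintro (⟨h, -⟩ | ⟨h, -⟩) <;> [exact hvx h; exact hva h]
    rw [e1]
    by_cases hb : (v = x ∧ w = b) ∨ (v = b ∧ w = x)
    · rcases hb with ⟨h, -⟩ | ⟨h1', h2⟩
      · exact absurd h hvx
      · have e2 : inner v w = (c x b).erase β := by
          rw [hinner, h1', h2]
          exact setP_yx
        rw [e2, h1', h2, hc.symm x b]
        exact Finset.erase_subset _ _
    · have e2 : inner v w = c v w := by
        rw [hinner]
        exact setP_eq_of_ne hb
      rw [e2]

end BQ

namespace BQ
open Finset
variable {V : Type*} [Fintype V] [DecidableEq V] {k : ℕ}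

/-- The fan step relation at centre `x`: we can move the hole from `a` to `b`
if some colour on the edge `(x,b)` is free at `a`. -/
def StepR (c : V → V → Finset (Fin k)) (x : V) : V → V → Prop :=
  fun a b => ∃ β, β ∈ c x b ∧ β ∈ freeC c a

lemma chain_transfer {α : Type*} {R R₂ : α → α → Prop} :
    ∀ {l : List α} {b : α}, List.Chain R b l →
      (∀ a₁ b₁, a₁ ∈ b :: l → b₁ ∈ l → R a₁ b₁ → R₂ a₁ b₁) → List.Chain R₂ b l := by
  intro l
  induction l with
  | nil => intro b _ _; exact List.Chain.nil
  | cons c l ih =>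
    intro b hch h
    rcases List.chain_cons.1 hch with ⟨hbc, hcl⟩
    refine List.chain_cons.2 ⟨h b c (by simp) (by simp) hbc, ih hcl ?_⟩
    intro a₁ b₁ ha hb
    exact h a₁ b₁ (by simp at ha ⊢; tauto) (by simp [hb])

lemma freeC_eq_of_used_eq {c₁ c₂ : V → V → Finset (Fin k)} {v : V}
    (h : used c₁ v = used c₂ v) : freeC c₁ v = freeC c₂ v := by
  unfold freeC; rw [h]

lemma shift_chain {m : V → V → ℕ} {x : V} (hm : ∀ u v, m u v = m v u) (hmxx : m x x = 0) :
    ∀ (l : List V) (c : V → V → Finset (Fin k)) (y₀ : V),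
    PC k (decP m x y₀) c → x ≠ y₀ → 1 ≤ m x y₀ →
    List.Chain (StepR c x) y₀ l → (y₀ :: l).Nodup →
    ∃ c', PC k (decP m x (l.getLastD y₀)) c' ∧ used c' x = used c x ∧
      freeC c (l.getLastD y₀) ⊆ freeC c' (l.getLastD y₀) ∧
      x ≠ l.getLastD y₀ ∧ 1 ≤ m x (l.getLastD y₀) := by
  intro l
  induction l with
  | nil =>
    intro c y₀ hc hxy h1 _ _
    exact ⟨c, hc, rfl, le_refl _, hxy, h1⟩
  | cons b l' ih =>
    intro c y₀ hc hxy h1 hch hnd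
    rcases List.chain_cons.1 hch with ⟨⟨β, hβb, hβf⟩, hcl⟩
    have hxb : x ≠ b := by
      rintro rfl
      have : (c x x).card = 0 := by
        rw [hc.card, decP_eq_of_ne (by rintro (⟨-, h⟩ | ⟨h, -⟩) <;> exact hxy h), hmxx]
      rw [Finset.card_eq_zero] at this
      rw [this] at hβb
      exact absurd hβb (Finset.notMem_empty β)
    have hy0b : y₀ ≠ b := by
      have := hnd
      rw [List.nodup_cons] at this
      exact fun h => this.1 (h ▸ List.mem_cons_self (a := b) (l := l'))
    obtain ⟨c₂, hc₂, hux, hfmono, h1b, hrow⟩ :=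
      shift_step hm hc hxy hxb hy0b h1 hβb hβf
    have hy0nl : y₀ ∉ b :: l' := (List.nodup_cons.1 hnd).1
    -- transfer the rest of the chain to c₂
    have hch₂ : List.Chain (StepR c₂ x) b l' := by
      refine chain_transfer hcl ?_
      rintro a₁ b₁ ha hb ⟨β', hβ'b, hβ'f⟩
      have hb₁y₀ : b₁ ≠ y₀ := fun h => hy0nl (h ▸ List.mem_cons_of_mem b hb)
      have hb₁b : b₁ ≠ b := fun h => (List.nodup_cons.1 (List.nodup_cons.1 hnd).2).1 (h ▸ hb)
      have ha₁y₀ : a₁ ≠ y₀ := fun h => hy0nl (h ▸ ha)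
      exact ⟨β', by rw [hrow b₁ hb₁y₀ hb₁b]; exact hβ'b, hfmono a₁ ha₁y₀ hβ'f⟩
    obtain ⟨c', hc', hux', hfm', hxz, h1z⟩ :=
      ih c₂ b hc₂ hxb h1b hch₂ (List.nodup_cons.1 hnd).2
    have hlast : (l'.getLastD b) ∈ b :: l' := List.getLastD_mem_cons (l := l') (a := b)
    have hlne : l'.getLastD b ≠ y₀ := fun h => hy0nl (h ▸ hlast)
    refine ⟨c', ?_, ?_, ?_, ?_, ?_⟩
    · rw [List.getLastD_cons]; exact hc'
    · rw [hux', hux]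
    · rw [List.getLastD_cons]
      exact (hfmono _ hlne).trans hfm'
    · rw [List.getLastD_cons]; exact hxz
    · rw [List.getLastD_cons]; exact h1z

lemma chain_concat {α : Type*} {R : α → α → Prop} :
    ∀ {l : List α} {a c : α}, List.Chain R a l → R (l.getLastD a) c →
      List.Chain R a (l ++ [c]) := by
  intro l
  induction l with
  | nil =>
    intro a c _ h
    exact List.chain_cons.2 ⟨h, List.Chain.nil⟩
  | cons b l ih =>
    intro a c hch h
    rcases List.chain_cons.1 hch with ⟨hab, hbl⟩
    exact List.chain_cons.2 ⟨hab, ih hbl (by rw [List.getLastD_cons] at h; exact h)⟩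

lemma chain_of_rtg {α : Type*} [DecidableEq α] {R : α → α → Prop} {y₀ z : α}
    (h : Relation.ReflTransGen R y₀ z) :
    ∃ l : List α, List.Chain R y₀ l ∧ (y₀ :: l).Nodup ∧ l.getLastD y₀ = z := by
  induction h with
  | refl => exact ⟨[], List.Chain.nil, by simp, rfl⟩
  | tail hab hbc ih =>
    rename_i b c'
    obtain ⟨l, hch, hnd, hlast⟩ := ih
    by_cases hc : c' ∈ y₀ :: l
    · -- cut the chain at the first occurrence of c'
      rcases List.mem_cons.1 hc with rfl | hcl
      · exact ⟨[], List.Chain.nil, by simp, rfl⟩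
      · obtain ⟨s, t, hst⟩ := List.append_of_mem hcl
        refine ⟨s ++ [c'], ?_, ?_, ?_⟩
        · have : List.Chain R y₀ (s ++ c' :: t) := hst ▸ hch
          exact (List.isChain_cons_split.1 this).1
        · have : (y₀ :: (s ++ [c'])).Sublist (y₀ :: l) := by
            rw [hst]
            refine List.Sublist.cons₂ y₀ ?_
            refine List.Sublist.append (List.Sublist.refl s) ?_
            simpa using List.Sublist.cons₂ c' (List.nil_sublist t)
          exact List.Nodup.sublist this hnd
        · have : s ++ [c'] ≠ [] := by simp
          rw [List.getLastD_eq_getLast?, List.getLast?_concat]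
          rfl
    · refine ⟨l ++ [c'], ?_, ?_, ?_⟩
      · rw [← hlast] at hbc
        exact chain_concat hch hbc
      · have : (y₀ :: (l ++ [c'])) = (y₀ :: l) ++ [c'] := by simp
        rw [this]
        refine List.Nodup.append hnd (by simp) ?_
        intro a ha hb
        simp at hb
        exact absurd (hb ▸ ha) hc
      · rw [List.getLastD_eq_getLast?, List.getLast?_concat]
        rfl

end BQ

namespace BQ
open Finset
variable {V : Type*} [Fintype V] [DecidableEq V] {k : ℕ}

/-- If `z` is in the fan of `(x,y₀)` and some colour is free at both `x` and `z`,
the whole demand `m` can be coloured. -/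
lemma fan_win {m : V → V → ℕ} {x y₀ z : V} {c : V → V → Finset (Fin k)} {γ : Fin k}
    (hm : ∀ u v, m u v = m v u) (hmxx : m x x = 0)
    (hc : PC k (decP m x y₀) c) (hxy : x ≠ y₀) (h1 : 1 ≤ m x y₀)
    (hrtg : Relation.ReflTransGen (StepR c x) y₀ z)
    (hγx : γ ∈ freeC c x) (hγz : γ ∈ freeC c z) : Colorable k m := by
  obtain ⟨l, hch, hnd, hlast⟩ := chain_of_rtg hrtg
  obtain ⟨c', hc', hux, hfm, hxz, h1z⟩ := shift_chain hm hmxx l c y₀ hc hxy h1 hch hnd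
  rw [hlast] at hc' hfm hxz h1z
  have hγx' : γ ∈ freeC c' x := by
    rw [freeC_eq_of_used_eq hux]
    exact hγx
  exact ⟨_, PC_add hc' hm hxz h1z hγx' (hfm hγz)⟩

/-- The α/β Kempe relation. -/
def KR (c : V → V → Finset (Fin k)) (α β : Fin k) : V → V → Prop :=
  fun u v => u ≠ v ∧ (α ∈ c u v ∨ β ∈ c u v)

lemma KR_symm {c : V → V → Finset (Fin k)} (hcs : ∀ u v, c u v = c v u) {α β : Fin k}
    {u v : V} (h : KR c α β u v) : KR c α β v u := by
  obtain ⟨h1, h2⟩ := h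
  exact ⟨h1.symm, by rw [hcs v u]; exact h2⟩

def ClosedK (c : V → V → Finset (Fin k)) (α β : Fin k) (P : Set V) : Prop :=
  ∀ u ∈ P, ∀ v, KR c α β u v → v ∈ P

open scoped Classical in
noncomputable def kswap (c : V → V → Finset (Fin k)) (α β : Fin k) (P : Set V) :
    V → V → Finset (Fin k) :=
  fun u v => if u ∈ P ∧ v ∈ P then (c u v).image (Equiv.swap α β) else c u v

lemma mem_image_swap {s : Finset (Fin k)} {α β γ : Fin k} :
    γ ∈ s.image (Equiv.swap α β) ↔ Equiv.swap α β γ ∈ s := by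
  constructor
  · rintro h
    rcases Finset.mem_image.1 h with ⟨δ, hδ, rfl⟩
    rwa [Equiv.swap_apply_self]
  · intro h
    exact Finset.mem_image.2 ⟨_, h, Equiv.swap_apply_self _ _ _⟩

lemma image_swap_eq_self {s : Finset (Fin k)} {α β : Fin k} (hα : α ∉ s) (hβ : β ∉ s) :
    s.image (Equiv.swap α β) = s := by
  ext γ
  rw [mem_image_swap]
  by_cases hγα : γ = α
  · subst hγα; rw [Equiv.swap_apply_left]
    constructor
    · intro h; exact absurd h hβ
    · intro h; exact absurd h hα
  · by_cases hγβ : γ = β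
    · subst hγβ; rw [Equiv.swap_apply_right]
      constructor
      · intro h; exact absurd h hα
      · intro h; exact absurd h hβ
    · rw [Equiv.swap_apply_of_ne_of_ne hγα hγβ]

lemma kswap_out {c : V → V → Finset (Fin k)} {α β : Fin k} {P : Set V} {u v : V}
    (hu : u ∉ P) : kswap c α β P u v = c u v := by
  unfold kswap
  rw [if_neg (fun h => hu h.1)]

lemma kswap_out' {c : V → V → Finset (Fin k)} {α β : Fin k} {P : Set V} {u v : V}
    (hv : v ∉ P) : kswap c α β P u v = c u v := by
  unfold kswap
  rw [if_neg (fun h => hv h.2)]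

lemma kswap_in {c : V → V → Finset (Fin k)} {α β : Fin k} {P : Set V} {u v : V}
    (hcs : ∀ u v, c u v = c v u) (hcl : ClosedK c α β P) (hu : u ∈ P) :
    kswap c α β P u v = (c u v).image (Equiv.swap α β) := by
  by_cases hv : v ∈ P
  · unfold kswap; rw [if_pos ⟨hu, hv⟩]
  · rw [kswap_out' hv]
    by_cases huv : u = v
    · subst huv; exact absurd hu hv
    · refine (image_swap_eq_self ?_ ?_).symm
      · intro hα; exact hv (hcl u hu v ⟨huv, Or.inl hα⟩)
      · intro hβ; exact hv (hcl u hu v ⟨huv, Or.inr hβ⟩)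

lemma PC_kswap {m : V → V → ℕ} {c : V → V → Finset (Fin k)} {α β : Fin k} {P : Set V}
    (h : PC k m c) (hcl : ClosedK c α β P) : PC k m (kswap c α β P) := by
  constructor
  · intro u v
    unfold kswap
    by_cases hp : u ∈ P ∧ v ∈ P
    · rw [if_pos hp, if_pos ⟨hp.2, hp.1⟩, h.symm]
    · rw [if_neg hp, if_neg (fun h' => hp ⟨h'.2, h'.1⟩), h.symm]
  · intro u v
    unfold kswap
    split
    · rw [Finset.card_image_of_injective _ (Equiv.injective _), h.card]
    · exact h.card u v
  · intro v u u' hne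
    by_cases hv : v ∈ P
    · rw [kswap_in h.symm hcl hv, kswap_in h.symm hcl hv]
      rw [Finset.disjoint_image (Equiv.injective _)]
      exact h.disj v u u' hne
    · rw [kswap_out hv, kswap_out hv]
      exact h.disj v u u' hne

lemma used_kswap_in {c : V → V → Finset (Fin k)} {α β : Fin k} {P : Set V} {u : V}
    (hcs : ∀ u v, c u v = c v u) (hcl : ClosedK c α β P) (hu : u ∈ P) :
    used (kswap c α β P) u = (used c u).image (Equiv.swap α β) := by
  ext γ
  rw [mem_image_swap, mem_used, mem_used]
  constructor
  · rintro ⟨w, hw⟩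
    rw [kswap_in hcs hcl hu, mem_image_swap] at hw
    exact ⟨w, hw⟩
  · rintro ⟨w, hw⟩
    exact ⟨w, by rw [kswap_in hcs hcl hu, mem_image_swap]; exact hw⟩

lemma free_kswap_in {c : V → V → Finset (Fin k)} {α β : Fin k} {P : Set V} {u : V}
    (hcs : ∀ u v, c u v = c v u) (hcl : ClosedK c α β P) (hu : u ∈ P) {γ : Fin k} :
    (γ ∈ freeC (kswap c α β P) u ↔ Equiv.swap α β γ ∈ freeC c u) := by
  unfold freeC
  rw [Finset.mem_sdiff, Finset.mem_sdiff, used_kswap_in hcs hcl hu, mem_image_swap]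
  simp

lemma used_kswap_out {c : V → V → Finset (Fin k)} {α β : Fin k} {P : Set V} {u : V}
    (hu : u ∉ P) : used (kswap c α β P) u = used c u := by
  ext γ
  rw [mem_used, mem_used]
  constructor
  · rintro ⟨w, hw⟩; exact ⟨w, by rwa [kswap_out hu] at hw⟩
  · rintro ⟨w, hw⟩; exact ⟨w, by rwa [kswap_out hu]⟩

lemma free_kswap_out {c : V → V → Finset (Fin k)} {α β : Fin k} {P : Set V} {u : V}
    (hu : u ∉ P) : freeC (kswap c α β P) u = freeC c u :=
  freeC_eq_of_used_eq (used_kswap_out hu)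

end BQ

namespace BQ
open Finset

open scoped Classical in
lemma no_three_leaves {W : Type*} [Fintype W] [DecidableEq W] (G : SimpleGraph W)
    {x y y' : W} (hxy : x ≠ y) (hxy' : x ≠ y') (hyy' : y ≠ y')
    (hdeg : ∀ v, (Finset.univ.filter (G.Adj v)).card ≤ 2)
    (hx : (Finset.univ.filter (G.Adj x)).card ≤ 1)
    (hy : (Finset.univ.filter (G.Adj y)).card ≤ 1)
    (hy' : (Finset.univ.filter (G.Adj y')).card ≤ 1)
    (hrxy : G.Reachable x y) (hrxy' : G.Reachable x y') : False := by
  set K : Finset W := Finset.univ.filter (fun v => G.Reachable x v) with hK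
  have hmemK : ∀ v, v ∈ K ↔ G.Reachable x v := by
    intro v; rw [hK, Finset.mem_filter]; simp
  have hxK : x ∈ K := (hmemK x).2 ⟨SimpleGraph.Walk.nil⟩
  have hyK : y ∈ K := (hmemK y).2 hrxy
  have hy'K : y' ∈ K := (hmemK y').2 hrxy'
  -- parent function decreasing the distance to x
  have hpar : ∀ v, ∃ u, v ∈ K.erase x → G.Adj v u ∧ G.dist x u < G.dist x v := by
    intro v
    by_cases hv : v ∈ K.erase x
    · have hvx : v ≠ x := (Finset.mem_erase.1 hv).1
      have hr : G.Reachable x v := (hmemK v).1 (Finset.mem_erase.1 hv).2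
      obtain ⟨w, hw⟩ := hr.exists_walk_length_eq_dist
      have hwrev : w.reverse.length = G.dist x v := by
        rw [SimpleGraph.Walk.length_reverse]; exact hw
      obtain ⟨u, hadj, rest, hrev⟩ := SimpleGraph.Walk.exists_eq_cons_of_ne hvx w.reverse
      refine ⟨u, fun _ => ⟨hadj, ?_⟩⟩
      have hlen : rest.length + 1 = G.dist x v := by
        rw [hrev] at hwrev
        simpa using hwrev
      have hdu : G.dist x u ≤ rest.length := by
        have := SimpleGraph.dist_le rest.reverse
        rwa [SimpleGraph.Walk.length_reverse] at this
      omega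
    · exact ⟨x, fun h => absurd h hv⟩
  choose p hp using hpar
  -- the big pair set
  set A : Finset (W × W) := K.biUnion (fun v => ({v} ×ˢ (Finset.univ.filter (G.Adj v)))) with hA
  have hcardA : A.card = ∑ v ∈ K, (Finset.univ.filter (G.Adj v)).card := by
    rw [hA, Finset.card_biUnion]
    · refine Finset.sum_congr rfl fun v _ => ?_
      rw [Finset.card_product, Finset.card_singleton, one_mul]
    · intro v _ w _ hvw
      rw [Function.onFun, Finset.disjoint_left]
      rintro ⟨a, b⟩ ha hb
      rw [Finset.mem_product, Finset.mem_singleton] at ha hb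
      exact hvw (ha.1.symm.trans hb.1)
  set S : Finset (W × W) := (K.erase x).biUnion
      (fun v => ({(v, p v), (p v, v)} : Finset (W × W))) with hS
  have hSA : S ⊆ A := by
    intro q hq
    rw [hS, Finset.mem_biUnion] at hq
    obtain ⟨v, hv, hqv⟩ := hq
    have hadj := (hp v hv).1
    have hvK : v ∈ K := Finset.mem_of_mem_erase hv
    have hpvK : p v ∈ K := by
      rw [hmemK]
      exact ((hmemK v).1 hvK).trans hadj.reachable
    rw [Finset.mem_insert, Finset.mem_singleton] at hqv
    rw [hA, Finset.mem_biUnion]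
    rcases hqv with rfl | rfl
    · exact ⟨v, hvK, by
        rw [Finset.mem_product, Finset.mem_singleton]
        exact ⟨rfl, Finset.mem_filter.2 ⟨Finset.mem_univ _, hadj⟩⟩⟩
    · exact ⟨p v, hpvK, by
        rw [Finset.mem_product, Finset.mem_singleton]
        exact ⟨rfl, Finset.mem_filter.2 ⟨Finset.mem_univ _, hadj.symm⟩⟩⟩
  have hdisjS : ∀ v ∈ K.erase x, ∀ w ∈ K.erase x, v ≠ w →
      Disjoint ({(v, p v), (p v, v)} : Finset (W × W)) {(w, p w), (p w, w)} := by
    intro v hv w hw hvw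
    have hdv := (hp v hv).2
    have hdw := (hp w hw).2
    rw [Finset.disjoint_left]
    intro q ha hb
    rw [Finset.mem_insert, Finset.mem_singleton] at ha hb
    rcases ha with ha | ha <;> rcases hb with hb | hb
    · exact hvw ((congrArg Prod.fst ha).symm.trans (congrArg Prod.fst hb))
    · have e1 : v = p w := (congrArg Prod.fst ha).symm.trans (congrArg Prod.fst hb)
      have e2 : p v = w := (congrArg Prod.snd ha).symm.trans (congrArg Prod.snd hb)
      rw [← e1] at hdw
      rw [e2] at hdv
      omega
    · have e1 : p v = w := (congrArg Prod.fst ha).symm.trans (congrArg Prod.fst hb)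
      have e2 : v = p w := (congrArg Prod.snd ha).symm.trans (congrArg Prod.snd hb)
      rw [← e2] at hdw
      rw [e1] at hdv
      omega
    · exact hvw ((congrArg Prod.snd ha).symm.trans (congrArg Prod.snd hb))
  have hcardS : S.card = 2 * (K.erase x).card := by
    rw [hS, Finset.card_biUnion hdisjS]
    have hpair : ∀ v ∈ K.erase x, ({(v, p v), (p v, v)} : Finset (W × W)).card = 2 := by
      intro v hv
      have hne : v ≠ p v := G.ne_of_adj (hp v hv).1
      rw [Finset.card_insert_of_notMem (by
        rw [Finset.mem_singleton]
        exact fun h => hne (congrArg Prod.fst h)), Finset.card_singleton]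
    rw [Finset.sum_congr rfl hpair, Finset.sum_const, smul_eq_mul, mul_comm]
  -- the three special vertices
  have hsub3 : ({x, y, y'} : Finset W) ⊆ K := by
    intro v hv
    rw [Finset.mem_insert, Finset.mem_insert, Finset.mem_singleton] at hv
    rcases hv with rfl | rfl | rfl <;> assumption
  have hc3 : ({x, y, y'} : Finset W).card = 3 := by
    rw [Finset.card_insert_of_notMem (by simp [hxy, hxy']),
      Finset.card_insert_of_notMem (by simp [hyy']), Finset.card_singleton]
  -- upper bound for the degree sum
  have hup : ∑ v ∈ K, (Finset.univ.filter (G.Adj v)).card ≤ 2 * K.card - 3 := by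
    have hsplit : ∑ v ∈ K \ {x, y, y'}, (Finset.univ.filter (G.Adj v)).card +
        ∑ v ∈ ({x, y, y'} : Finset W), (Finset.univ.filter (G.Adj v)).card =
        ∑ v ∈ K, (Finset.univ.filter (G.Adj v)).card := Finset.sum_sdiff hsub3
    have hbig : ∑ v ∈ K \ {x, y, y'}, (Finset.univ.filter (G.Adj v)).card ≤
        2 * (K \ {x, y, y'}).card := by
      calc ∑ v ∈ K \ {x, y, y'}, (Finset.univ.filter (G.Adj v)).card
          ≤ ∑ _v ∈ K \ {x, y, y'}, 2 := Finset.sum_le_sum (fun v _ => hdeg v)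
      _ = 2 * (K \ {x, y, y'}).card := by rw [Finset.sum_const, smul_eq_mul, mul_comm]
    have hsmall : ∑ v ∈ ({x, y, y'} : Finset W), (Finset.univ.filter (G.Adj v)).card ≤ 3 := by
      rw [Finset.sum_insert (by simp [hxy, hxy']), Finset.sum_insert (by simp [hyy']),
        Finset.sum_singleton]
      omega
    have hcsd : (K \ {x, y, y'}).card = K.card - 3 := by
      rw [Finset.card_sdiff_of_subset hsub3, hc3]
    have h3 : 3 ≤ K.card := hc3 ▸ Finset.card_le_card hsub3
    omega
  have hxcard : (K.erase x).card = K.card - 1 := Finset.card_erase_of_mem hxK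
  have h3 : 3 ≤ K.card := hc3 ▸ Finset.card_le_card hsub3
  have hSAcard := Finset.card_le_card hSA
  omega

end BQ

namespace BQ
open Finset
variable {V : Type*} [Fintype V] [DecidableEq V] {k : ℕ}

lemma chain_take {α : Type*} {R : α → α → Prop} :
    ∀ {l : List α} {a : α} (j : ℕ), List.Chain R a l → List.Chain R a (l.take j) := by
  intro l
  induction l with
  | nil => intro a j _; rw [List.take_nil]; exact List.Chain.nil
  | cons b l ih =>
    intro a j hch
    rcases List.chain_cons.1 hch with ⟨hab, hbl⟩
    cases j with
    | zero => exact List.Chain.nil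
    | succ j => exact List.chain_cons.2 ⟨hab, ih j hbl⟩

lemma rtg_of_chain {α : Type*} {R : α → α → Prop} :
    ∀ {l : List α} {a : α}, List.Chain R a l → Relation.ReflTransGen R a (l.getLastD a) := by
  intro l
  induction l with
  | nil => intro a _; exact Relation.ReflTransGen.refl
  | cons b l ih =>
    intro a hch
    rcases List.chain_cons.1 hch with ⟨hab, hbl⟩
    rw [List.getLastD_cons]
    exact Relation.ReflTransGen.head hab (ih hbl)

lemma getLastD_take {α : Type*} :
    ∀ (l : List α) (j : ℕ) (d : α) (h : j ≤ l.length),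
      (l.take j).getLastD d = (d :: l)[j]'(by simp; omega) := by
  intro l
  induction l with
  | nil =>
    intro j d h
    simp at h
    subst h
    simp
  | cons b l ih =>
    intro j d h
    cases j with
    | zero => simp
    | succ j =>
      have hj : j ≤ l.length := by simpa using h
      rw [List.take_succ_cons, List.getLastD_cons, ih j b hj]
      simp

lemma prefix_of_mem_dropLast {α : Type*} {l : List α} {y₀ a : α}
    (h : a ∈ (y₀ :: l).dropLast) :
    ∃ j, j < l.length ∧ (l.take j).getLastD y₀ = a := by
  rw [List.mem_iff_getElem] at h
  obtain ⟨i, hi, hget⟩ := h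
  have hlen : (y₀ :: l).dropLast.length = l.length := by simp
  have hil : i < l.length := by rw [hlen] at hi; exact hi
  refine ⟨i, hil, ?_⟩
  rw [getLastD_take l i y₀ (le_of_lt hil)]
  rw [List.getElem_dropLast] at hget
  exact hget

/-- chain transfer knowing sources are not the last element -/
lemma chain_transfer' {α : Type*} {R R₂ : α → α → Prop} :
    ∀ {l : List α} {b : α}, List.Chain R b l →
      (∀ a₁ b₁, a₁ ∈ (b :: l).dropLast → b₁ ∈ l → R a₁ b₁ → R₂ a₁ b₁) → List.Chain R₂ b l := by
  intro l
  induction l with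
  | nil => intro b _ _; exact List.Chain.nil
  | cons c l ih =>
    intro b hch h
    rcases List.chain_cons.1 hch with ⟨hbc, hcl⟩
    refine List.chain_cons.2 ⟨h b c (by
      rw [List.dropLast_cons₂]
      exact List.mem_cons_self (a := b)) (by simp) hbc, ih hcl ?_⟩
    intro a₁ b₁ ha hb
    refine h a₁ b₁ ?_ (by simp [hb])
    rw [List.dropLast_cons₂]
    exact List.mem_cons_of_mem b ha

end BQ

namespace BQ
open Finset
variable {V : Type*} [Fintype V] [DecidableEq V] {k : ℕ}

/-- KEY: if `z` is in the fan of `(x, y₀)` w.r.t. `c`, `α` is free at `x`, `β` free at `z`,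
and `m` is not colourable, then `x` lies in the α/β Kempe component of `z`. -/
lemma key {m : V → V → ℕ} {x y₀ : V} {c : V → V → Finset (Fin k)} {α β : Fin k}
    (hm : ∀ u v, m u v = m v u) (hmxx : m x x = 0) (hnc : ¬ Colorable k m)
    (hc : PC k (decP m x y₀) c) (hxy : x ≠ y₀) (h1 : 1 ≤ m x y₀)
    (hα : α ∈ freeC c x) :
    ∀ (n : ℕ) (l : List V), l.length ≤ n → (y₀ :: l).Nodup →
      List.Chain (StepR c x) y₀ l → ∀ {z : V}, l.getLastD y₀ = z → β ∈ freeC c z →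
      Relation.ReflTransGen (KR c α β) z x := by
  intro n
  induction n using Nat.strong_induction_on with
  | _ n ih =>
    intro l hlen hnd hch z hz hβz
    by_contra hxP
    set P : Set V := {v | Relation.ReflTransGen (KR c α β) z v} with hP
    have hzP : z ∈ P := Relation.ReflTransGen.refl
    have hcl : ClosedK c α β P := by
      intro u hu v huv
      exact Relation.ReflTransGen.tail hu huv
    set c₂ := kswap c α β P with hc₂def
    have hc₂ : PC k (decP m x y₀) c₂ := PC_kswap hc hcl
    have hrowx : ∀ u, c₂ x u = c x u := fun u => kswap_out hxP
    have hux : used c₂ x = used c x := by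
      ext γ
      rw [mem_used, mem_used]
      constructor
      · rintro ⟨w, hw⟩; exact ⟨w, by rwa [hrowx] at hw⟩
      · rintro ⟨w, hw⟩; exact ⟨w, by rwa [hrowx]⟩
    have hα₂ : α ∈ freeC c₂ x := by rwa [freeC_eq_of_used_eq hux]
    have hα₂z : α ∈ freeC c₂ z := by
      rw [free_kswap_in hc.symm hcl hzP, Equiv.swap_apply_left]
      exact hβz
    -- no earlier fan vertex in P can have β free
    have hsrc : ∀ a ∈ (y₀ :: l).dropLast, a ∈ P → β ∉ freeC c a := by
      intro a ha haP hβa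
      obtain ⟨j, hjl, hja⟩ := prefix_of_mem_dropLast ha
      have htk : List.Chain (StepR c x) y₀ (l.take j) := chain_take j hch
      have hndk : (y₀ :: l.take j).Nodup :=
        List.Nodup.sublist (List.Sublist.cons₂ y₀ (List.take_sublist j l)) hnd
      have hlk : (l.take j).length < n := by
        rw [List.length_take]
        omega
      have hra : Relation.ReflTransGen (KR c α β) a x :=
        ih _ hlk (l.take j) (le_refl _) hndk htk hja hβa
      exact hxP (Relation.ReflTransGen.trans haP hra)
    -- the chain survives the swap
    have hch₂ : List.Chain (StepR c₂ x) y₀ l := by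
      refine chain_transfer' hch ?_
      rintro a₁ b₁ ha hb ⟨β', hβ'c, hβ'f⟩
      refine ⟨β', by rw [hrowx]; exact hβ'c, ?_⟩
      by_cases haP : a₁ ∈ P
      · rw [free_kswap_in hc.symm hcl haP]
        have hβ'α : β' ≠ α := by
          intro heq
          exact (mem_free.1 hα b₁) (heq ▸ hβ'c)
        have hβ'β : β' ≠ β := by
          intro heq
          exact hsrc a₁ ha haP (heq ▸ hβ'f)
        rw [Equiv.swap_apply_of_ne_of_ne hβ'α hβ'β]
        exact hβ'f
      · rw [free_kswap_out haP]
        exact hβ'f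
    -- win : colourable, contradiction
    have hrtg₂ : Relation.ReflTransGen (StepR c₂ x) y₀ z := hz ▸ rtg_of_chain hch₂
    exact hnc (fan_win hm hmxx hc₂ hxy h1 hrtg₂ hα₂ hα₂z)

end BQ

namespace BQ
open Finset
variable {V : Type*} [Fintype V] [DecidableEq V] {k : ℕ}

open scoped Classical in
/-- The fan inequality: if `m` is not `k`-colourable but `m` minus the edge `(x,y₀)` is,
then the fan `F` at `x` satisfies `k|F| + 2 ≤ Σ_{z∈F} (deg z + m x z)`. -/
lemma ext_ineq {m : V → V → ℕ} {x y₀ : V} {c : V → V → Finset (Fin k)}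
    (hm : ∀ u v, m u v = m v u) (hmxx : m x x = 0) (hdk : ∀ v, dm m v ≤ k)
    (hnc : ¬ Colorable k m) (hc : PC k (decP m x y₀) c) (hxy : x ≠ y₀) (h1 : 1 ≤ m x y₀) :
    ∃ F : Finset V, y₀ ∈ F ∧ (∀ z ∈ F, 1 ≤ m x z ∧ z ≠ x) ∧
      (k : ℤ) * F.card + 2 ≤ ∑ z ∈ F, ((dm m z : ℤ) + m x z) := by
  set F : Finset V := Finset.univ.filter
      (fun z => Relation.ReflTransGen (StepR c x) y₀ z) with hF
  have hmemF : ∀ z, z ∈ F ↔ Relation.ReflTransGen (StepR c x) y₀ z := by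
    intro z; rw [hF, Finset.mem_filter]; simp
  have hy₀F : y₀ ∈ F := (hmemF y₀).2 Relation.ReflTransGen.refl
  have hcxx : c x x = ∅ := by
    have : (c x x).card = 0 := by
      rw [hc.card, decP_eq_of_ne (by rintro (⟨-, h⟩ | ⟨h, -⟩) <;> exact hxy h), hmxx]
    rwa [Finset.card_eq_zero] at this
  have hmem : ∀ z ∈ F, 1 ≤ m x z ∧ z ≠ x := by
    intro z hz
    rw [hmemF] at hz
    induction hz with
    | refl => exact ⟨h1, hxy.symm⟩
    | @tail b z' hab hbc ih =>
      obtain ⟨β, hβc, -⟩ := hbc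
      have hz'x : z' ≠ x := by
        rintro rfl
        rw [hcxx] at hβc
        exact absurd hβc (Finset.notMem_empty β)
      have : 1 ≤ (c x z').card := Finset.card_pos.2 ⟨β, hβc⟩
      rw [hc.card] at this
      exact ⟨le_trans this (decP_le m x y₀ x z'), hz'x⟩
  have hdmx : 1 ≤ dm m x :=
    le_trans h1 (Finset.single_le_sum (f := fun u => m x u) (fun u _ => Nat.zero_le _)
      (Finset.mem_univ y₀))
  have hfreex : (freeC c x).Nonempty := by
    refine free_nonempty hc x ?_
    rw [dm_decP hxy hm h1 x, if_pos (Or.inl rfl)]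
    have := hdk x
    omega
  obtain ⟨α, hα⟩ := hfreex
  -- pairwise disjointness of the free sets of fan members
  have hdisjF : ∀ z ∈ F, ∀ z' ∈ F, z ≠ z' → Disjoint (freeC c z) (freeC c z') := by
    intro z hz z' hz' hzz'
    rw [Finset.disjoint_left]
    intro β hβz hβz'
    have hkey : ∀ w ∈ F, β ∈ freeC c w → Relation.ReflTransGen (KR c α β) w x := by
      intro w hw hβw
      rw [hmemF] at hw
      obtain ⟨l, hch, hnd, hlast⟩ := chain_of_rtg hw
      exact key hm hmxx hnc hc hxy h1 hα l.length l (le_refl _) hnd hch hlast hβw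
    have hrz := hkey z hz hβz
    have hrz' := hkey z' hz' hβz'
    set SG : SimpleGraph V :=
      { Adj := fun u v => KR c α β u v
        symm := ⟨fun u v h => KR_symm hc.symm h⟩
        loopless := ⟨fun u h => h.1 rfl⟩ } with hSG
    have hreach : ∀ w, Relation.ReflTransGen (KR c α β) w x → SG.Reachable x w := by
      intro w hw
      rw [SimpleGraph.reachable_iff_reflTransGen]
      exact (@Std.Symm.symm _ _ (@Relation.ReflTransGen.stdSymm _ _ ⟨fun u v h => KR_symm hc.symm h⟩) _ _ hw)
    have hcount : ∀ (v : V) (γ : Fin k),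
        (Finset.univ.filter (fun u => γ ∈ c v u)).card ≤ 1 := by
      intro v γ
      refine Finset.card_le_one.2 ?_
      intro a ha b hb
      rw [Finset.mem_filter] at ha hb
      exact row_unique hc ha.2 hb.2
    have hdeg2 : ∀ v, (Finset.univ.filter (SG.Adj v)).card ≤ 2 := by
      intro v
      have hsub : Finset.univ.filter (SG.Adj v) ⊆
          (Finset.univ.filter (fun u => α ∈ c v u)) ∪
          (Finset.univ.filter (fun u => β ∈ c v u)) := by
        intro u hu
        rw [Finset.mem_filter] at hu
        rcases hu.2.2 with h | h
        · exact Finset.mem_union_left _ (Finset.mem_filter.2 ⟨Finset.mem_univ _, h⟩)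
        · exact Finset.mem_union_right _ (Finset.mem_filter.2 ⟨Finset.mem_univ _, h⟩)
      calc (Finset.univ.filter (SG.Adj v)).card
          ≤ _ := Finset.card_le_card hsub
        _ ≤ _ := Finset.card_union_le _ _
        _ ≤ 2 := by
            have := hcount v α
            have := hcount v β
            omega
    have hdeg1α : ∀ v, α ∈ freeC c v → (Finset.univ.filter (SG.Adj v)).card ≤ 1 := by
      intro v hv
      refine le_trans (Finset.card_le_card ?_) (hcount v β)
      intro u hu
      rw [Finset.mem_filter] at hu ⊢
      refine ⟨Finset.mem_univ _, ?_⟩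
      rcases hu.2.2 with h | h
      · exact absurd h (mem_free.1 hv u)
      · exact h
    have hdeg1β : ∀ v, β ∈ freeC c v → (Finset.univ.filter (SG.Adj v)).card ≤ 1 := by
      intro v hv
      refine le_trans (Finset.card_le_card ?_) (hcount v α)
      intro u hu
      rw [Finset.mem_filter] at hu ⊢
      refine ⟨Finset.mem_univ _, ?_⟩
      rcases hu.2.2 with h | h
      · exact h
      · exact absurd h (mem_free.1 hv u)
    exact no_three_leaves SG (Ne.symm (hmem z hz).2) (Ne.symm (hmem z' hz').2) hzz'
      hdeg2 (hdeg1α x hα) (hdeg1β z hβz) (hdeg1β z' hβz')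
      (hreach z hrz) (hreach z' hrz')
  -- every colour free at a fan member sits on a fan edge
  have hUW : ∀ z ∈ F, ∀ β' ∈ freeC c z, ∃ u ∈ F, β' ∈ c x u := by
    intro z hz β' hβ'
    by_cases hβx : β' ∈ freeC c x
    · exact absurd (fan_win hm hmxx hc hxy h1 ((hmemF z).1 hz) hβx hβ') hnc
    · have : β' ∈ used c x := by
        unfold freeC at hβx
        rw [Finset.mem_sdiff] at hβx
        push_neg at hβx
        exact hβx (Finset.mem_univ _)
      obtain ⟨u, hu⟩ := mem_used.1 this
      refine ⟨u, ?_, hu⟩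
      rw [hmemF]
      exact Relation.ReflTransGen.tail ((hmemF z).1 hz) ⟨β', hu, hβ'⟩
  -- cardinality comparison
  have hcardW : (F.biUnion (fun z => c x z)).card = ∑ z ∈ F, (c x z).card :=
    Finset.card_biUnion (fun z _ z' _ h => hc.disj x z z' h)
  have hcardU : (F.biUnion (fun z => freeC c z)).card = ∑ z ∈ F, (freeC c z).card :=
    Finset.card_biUnion hdisjF
  have hsubUW : F.biUnion (fun z => freeC c z) ⊆ F.biUnion (fun z => c x z) := by
    intro β' hβ'
    rw [Finset.mem_biUnion] at hβ' ⊢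
    obtain ⟨z, hz, hβ'z⟩ := hβ'
    exact hUW z hz β' hβ'z
  have hle : ∑ z ∈ F, (freeC c z).card ≤ ∑ z ∈ F, (c x z).card := by
    rw [← hcardU, ← hcardW]
    exact Finset.card_le_card hsubUW
  -- pointwise identities over ℤ
  have hptW : ∀ z ∈ F, ((c x z).card : ℤ) = (m x z : ℤ) - (if z = y₀ then 1 else 0) := by
    intro z hz
    rw [hc.card]
    by_cases hzy : z = y₀
    · rw [hzy, if_pos rfl, decP_xy hxy, Nat.cast_sub h1]
      norm_num
    · rw [if_neg hzy,
        decP_eq_of_ne (by rintro (⟨-, h⟩ | ⟨h, -⟩) <;> [exact hzy h; exact hxy h])]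
      ring
  have hptU : ∀ z ∈ F, ((freeC c z).card : ℤ) =
      (k : ℤ) - (dm m z : ℤ) + (if z = y₀ then 1 else 0) := by
    intro z hz
    rw [card_free' hc z, dm_decP hxy hm h1 z]
    by_cases hzy : z = y₀
    · rw [if_pos (Or.inr hzy), if_pos hzy]
      have hdmy : 1 ≤ dm m z := by
        have hmz : 1 ≤ m z x := by rw [← hm x z, hzy]; exact h1
        exact le_trans hmz (Finset.single_le_sum (f := fun u => m z u)
          (fun u _ => Nat.zero_le _) (Finset.mem_univ x))
      rw [Nat.cast_sub hdmy]
      ring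
    · rw [if_neg (by rintro (h | h); exacts [(hmem z hz).2 h, hzy h]), if_neg hzy]
      simp
  -- assemble
  have hsumW : ∑ z ∈ F, ((c x z).card : ℤ) = (∑ z ∈ F, (m x z : ℤ)) - 1 := by
    rw [Finset.sum_congr rfl hptW, Finset.sum_sub_distrib,
      Finset.sum_ite_eq' F y₀ (fun _ => (1 : ℤ)), if_pos hy₀F]
  have hsumU : ∑ z ∈ F, ((freeC c z).card : ℤ) =
      (k : ℤ) * F.card - (∑ z ∈ F, (dm m z : ℤ)) + 1 := by
    rw [Finset.sum_congr rfl hptU, Finset.sum_add_distrib, Finset.sum_sub_distrib,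
      Finset.sum_ite_eq' F y₀ (fun _ => (1 : ℤ)), if_pos hy₀F, Finset.sum_const,
      nsmul_eq_mul, mul_comm]
  have hleZ : ∑ z ∈ F, ((freeC c z).card : ℤ) ≤ ∑ z ∈ F, ((c x z).card : ℤ) := by
    rw [← Nat.cast_sum, ← Nat.cast_sum]
    exact_mod_cast hle
  refine ⟨F, hy₀F, hmem, ?_⟩
  rw [Finset.sum_add_distrib]
  rw [hsumU, hsumW] at hleZ
  linarith

end BQ

namespace BQ
open Finset

variable {V : Type*} [Fintype V] [DecidableEq V]

open scoped Classical in
lemma main (G : Multigraph V) (t : ℕ)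
    (hmul : ∀ u v, (G.tCore t).mu u v ≤ t + 1)
    (B : SimpleGraph V) (hB : ∀ u v, B.Adj u v ↔ (G.tCore t).mu u v = t + 1)
    (hq : HasFullBQueue B) :
    ∀ (n : ℕ) (m : V → V → ℕ), (∀ u v, m u v = m v u) → (∀ u v, m u v ≤ G.mu u v) →
      (∑ v, dm m v ≤ n) → Colorable (G.maxDeg + t) m := by
  set k := G.maxDeg + t with hk
  -- the core predicate
  set Core : V → Prop := fun v => G.maxDeg + t < G.deg v + G.locMult v with hCore
  have hB' : ∀ u v, B.Adj u v ↔ (Core u ∧ Core v ∧ G.mu u v = t + 1) := by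
    intro u v
    rw [hB]
    show (if Core u ∧ Core v then G.mu u v else 0) = t + 1 ↔ _
    by_cases h : Core u ∧ Core v
    · rw [if_pos h]
      tauto
    · rw [if_neg h]
      constructor
      · omega
      · tauto
  intro n
  induction n using Nat.strong_induction_on with
  | _ n ih =>
    intro m hm hmle htot
    by_contra hnc
    -- m has an edge
    have hmxx : ∀ v, m v v = 0 := fun v => Nat.le_zero.1 ((hmle v v).trans (G.loopless v).le)
    have hdeg : ∀ v, dm m v ≤ G.deg v := by
      intro v
      exact Finset.sum_le_sum (fun u _ => hmle v u)
    have hdk : ∀ v, dm m v ≤ k := by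
      intro v
      refine (hdeg v).trans (le_trans ?_ (Nat.le_add_right _ t))
      exact Finset.le_sup (Finset.mem_univ v)
    have hex : ∃ x, 1 ≤ dm m x := by
      by_contra hno
      push_neg at hno
      refine hnc ⟨fun _ _ => ∅, ?_, ?_, ?_⟩
      · intro u v; rfl
      · intro u v
        have h0 : dm m u = 0 := by have := hno u; omega
        have h0' := Finset.sum_eq_zero_iff.1 (show ∑ w, m u w = 0 from h0)
        simp [h0' v (Finset.mem_univ v)]
      · intro v u u' _
        simp
    -- removing any edge of m gives a colourable demand
    have hrem : ∀ x y₀, 1 ≤ m x y₀ → Colorable k (decP m x y₀) := by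
      intro x y₀ h1
      have hxy : x ≠ y₀ := by
        rintro rfl
        rw [hmxx x] at h1
        omega
      have htot' : ∑ v, dm (decP m x y₀) v < ∑ v, dm m v := by
        refine Finset.sum_lt_sum (fun v _ => ?_) ⟨x, Finset.mem_univ x, ?_⟩
        · rw [dm_decP hxy hm h1 v]
          split <;> omega
        · rw [dm_decP hxy hm h1 x, if_pos (Or.inl rfl)]
          have h1' : 1 ≤ dm m x :=
            le_trans h1 (Finset.single_le_sum (f := fun u => m x u)
              (fun u _ => Nat.zero_le _) (Finset.mem_univ y₀))
          omega
      have htotn : ∑ v, dm m v - 1 < n := by omega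
      refine ih (∑ v, dm m v - 1) (by omega) (decP m x y₀) (decP_symm hm x y₀)
        (fun u v => (decP_le m x y₀ u v).trans (hmle u v)) (by omega)
    -- the blocked-fan inequality at every edge
    have hblocked : ∀ x y₀, 1 ≤ m x y₀ →
        ∃ F : Finset V, y₀ ∈ F ∧ (∀ z ∈ F, 1 ≤ m x z ∧ z ≠ x) ∧
          (k : ℤ) * F.card + 2 ≤ ∑ z ∈ F, ((dm m z : ℤ) + m x z) := by
      intro x y₀ h1
      have hxy : x ≠ y₀ := by
        rintro rfl
        rw [hmxx x] at h1
        omega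
      obtain ⟨c, hc⟩ := hrem x y₀ h1
      exact ext_ineq hm (hmxx x) hdk hnc hc hxy h1
    -- heavy fan members are core vertices with big multiplicity
    have hheavy_core : ∀ x z, 1 ≤ m x z → (k + 1 : ℤ) ≤ (dm m z : ℤ) + m x z →
        Core z ∧ t + 1 ≤ m x z ∧ G.maxDeg ≤ dm m z + m x z - (t + 1) := by
      intro x z h1 hkz
      have hdz : dm m z ≤ G.deg z := hdeg z
      have hmu : m z x ≤ G.mu z x := hmle z x
      have hloc : G.mu z x ≤ G.locMult z := Finset.le_sup (Finset.mem_univ x)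
      have hmzx : m z x = m x z := hm z x
      have hdm : dm m z ≤ G.maxDeg := le_trans hdz (Finset.le_sup (Finset.mem_univ z))
      have hkz' : k + 1 ≤ dm m z + m x z := by exact_mod_cast hkz
      refine ⟨?_, by omega, by omega⟩
      show G.maxDeg + t < G.deg z + G.locMult z
      omega
    -- D4 : every core vertex with an m-edge has two B-neighbours in T
    set T : V → Prop := fun z => Core z ∧ dm m z = G.maxDeg with hT
    have hD4 : ∀ x, Core x → 1 ≤ dm m x →
        ∃ z₁ z₂, z₁ ≠ z₂ ∧ (B.Adj x z₁ ∧ T z₁) ∧ (B.Adj x z₂ ∧ T z₂) := by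
      intro x hx hdx
      have hexy : ∃ y₀, 1 ≤ m x y₀ := by
        by_contra hno
        push_neg at hno
        have : dm m x = 0 := by
          unfold dm
          refine Finset.sum_eq_zero (fun u _ => ?_)
          have := hno u
          omega
        omega
      obtain ⟨y₀, h1⟩ := hexy
      obtain ⟨F, hy₀F, hmemF, hineq⟩ := hblocked x y₀ h1
      set Fh := F.filter (fun z => (k + 1 : ℤ) ≤ (dm m z : ℤ) + m x z) with hFh
      -- each heavy member is a B-neighbour in T
      have hprop : ∀ z ∈ Fh, B.Adj x z ∧ T z := by
        intro z hz
        rw [hFh, Finset.mem_filter] at hz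
        obtain ⟨hzF, hzk⟩ := hz
        obtain ⟨hcz, htm, hdmz⟩ := hheavy_core x z (hmemF z hzF).1 hzk
        have hmuxz : G.mu x z = t + 1 := by
          have hle1 : G.mu x z ≤ t + 1 := by
            have := hmul x z
            show _ ≤ _
            have hHeq : (G.tCore t).mu x z = G.mu x z := if_pos ⟨hx, hcz⟩
            omega
          have : t + 1 ≤ G.mu x z := le_trans htm (hmle x z)
          omega
        have hBadj : B.Adj x z := (hB' x z).2 ⟨hx, hcz, hmuxz⟩
        have hmxz : m x z ≤ t + 1 := le_trans (hmle x z) hmuxz.le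
        have hdmmax : dm m z ≤ G.maxDeg :=
          le_trans (hdeg z) (Finset.le_sup (Finset.mem_univ z))
        exact ⟨hBadj, hcz, by omega⟩
      -- at least two heavy members
      have h2 : 2 ≤ Fh.card := by
        by_contra hlt
        push_neg at hlt
        have hbound : ∑ z ∈ F, ((dm m z : ℤ) + m x z) ≤
            (k : ℤ) * F.card + Fh.card := by
          have hpt : ∀ z ∈ F, ((dm m z : ℤ) + m x z) ≤
              (k : ℤ) + (if (k + 1 : ℤ) ≤ (dm m z : ℤ) + m x z then 1 else 0) := by
            intro z hzF
            split_ifs with hcond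
            · obtain ⟨hcz, htm, hdmz⟩ := hheavy_core x z (hmemF z hzF).1 hcond
              have hmuxz : G.mu x z ≤ t + 1 := by
                have := hmul x z
                have hHeq : (G.tCore t).mu x z = G.mu x z := if_pos ⟨hx, hcz⟩
                omega
              have hmxz : m x z ≤ t + 1 := le_trans (hmle x z) hmuxz
              have hdmmax : dm m z ≤ G.maxDeg :=
                le_trans (hdeg z) (Finset.le_sup (Finset.mem_univ z))
              have h1' : (m x z : ℤ) ≤ t + 1 := by exact_mod_cast hmxz
              have h2' : (dm m z : ℤ) ≤ G.maxDeg := by exact_mod_cast hdmmax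
              rw [hk]
              push_cast
              omega
            · push_neg at hcond
              omega
          calc ∑ z ∈ F, ((dm m z : ℤ) + m x z)
              ≤ ∑ z ∈ F, ((k : ℤ) + (if (k + 1 : ℤ) ≤ (dm m z : ℤ) + m x z then 1 else 0)) :=
                Finset.sum_le_sum hpt
          _ = (k : ℤ) * F.card + Fh.card := by
              rw [Finset.sum_add_distrib, Finset.sum_const, nsmul_eq_mul, mul_comm,
                ← Finset.sum_filter, ← hFh]
              simp
        have : (Fh.card : ℤ) ≤ 1 := by exact_mod_cast Nat.lt_succ_iff.1 hlt
        omega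
      obtain ⟨z₁, hz₁, z₂, hz₂, hne⟩ := Finset.one_lt_card.1 (by omega : 1 < Fh.card)
      exact ⟨z₁, z₂, hne, hprop z₁ hz₁, hprop z₂ hz₂⟩
    -- T is nonempty
    have hTne : ∃ w, T w := by
      obtain ⟨x₀, hx₀⟩ := hex
      have hexy : ∃ y₀, 1 ≤ m x₀ y₀ := by
        by_contra hno
        push_neg at hno
        have : dm m x₀ = 0 := by
          unfold dm
          refine Finset.sum_eq_zero (fun u _ => ?_)
          have := hno u
          omega
        omega
      obtain ⟨y₀, h1⟩ := hexy
      obtain ⟨F, hy₀F, hmemF, hineq⟩ := hblocked x₀ y₀ h1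
      -- some heavy member exists
      have hexh : ∃ z ∈ F, (k + 1 : ℤ) ≤ (dm m z : ℤ) + m x₀ z := by
        by_contra hno
        push_neg at hno
        have : ∑ z ∈ F, ((dm m z : ℤ) + m x₀ z) ≤ (k : ℤ) * F.card := by
          calc ∑ z ∈ F, ((dm m z : ℤ) + m x₀ z) ≤ ∑ _z ∈ F, (k : ℤ) :=
            Finset.sum_le_sum (fun z hz => by have := hno z hz; omega)
          _ = (k : ℤ) * F.card := by rw [Finset.sum_const, nsmul_eq_mul, mul_comm]
        omega
      obtain ⟨z, hzF, hzk⟩ := hexh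
      obtain ⟨hcz, htm, -⟩ := hheavy_core x₀ z (hmemF z hzF).1 hzk
      have hdz : 1 ≤ dm m z := by
        have : 1 ≤ m z x₀ := by
          rw [hm z x₀]
          omega
        exact le_trans this (Finset.single_le_sum (f := fun u => m z u)
          (fun u _ => Nat.zero_le _) (Finset.mem_univ x₀))
      obtain ⟨z₁, z₂, hne, ⟨-, hT1⟩, -⟩ := hD4 z hcz hdz
      exact ⟨z₁, hT1⟩
    -- now the queue argument
    obtain ⟨q, u, S, huinj, hS0, hSdef, hScard, hSone, hSq⟩ := hq
    obtain ⟨w₀, hw₀⟩ := hTne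
    have hmax1 : 1 ≤ G.maxDeg := by
      obtain ⟨x₀, hx₀⟩ := hex
      exact le_trans (le_trans hx₀ (hdeg x₀)) (Finset.le_sup (Finset.mem_univ x₀))
    have hPex : ∃ j, ∃ w, w ∈ S j ∧ T w :=
      ⟨q, w₀, by rw [hSq]; exact Set.mem_univ w₀, hw₀⟩
    set j := Nat.find hPex with hj
    have hPj : ∃ w, w ∈ S j ∧ T w := Nat.find_spec hPex
    have hjq : j ≤ q := Nat.find_min' hPex ⟨w₀, by rw [hSq]; exact Set.mem_univ w₀, hw₀⟩
    have hj0 : j ≠ 0 := by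
      intro h0
      obtain ⟨w, hwS, -⟩ := hPj
      rw [h0, hS0] at hwS
      exact hwS
    set i := j - 1 with hi
    have hiq : i < q := by omega
    have hSi : ¬ ∃ w, w ∈ S i ∧ T w := Nat.find_min hPex (by omega)
    obtain ⟨w, hwS, hwT⟩ := hPj
    have hji : j = i + 1 := by omega
    rw [hji, hSdef i hiq] at hwS
    have hwnotSi : w ∉ S i := fun h => hSi ⟨w, h, hwT⟩
    -- establish : u i is a core vertex with an m-edge
    have hcoreu : Core (u i) ∧ 1 ≤ dm m (u i) := by
      rcases hwS with (hw1 | hw2) | hw3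
      · -- w is a B-neighbour of u i
        have hBadj : B.Adj (u i) w := hw1
        obtain ⟨hcu, hcw, hmuw⟩ := (hB' (u i) w).1 hBadj
        -- m w (u i) is at least t + 1
        have hmuw' : G.mu w (u i) = t + 1 := by rw [G.symm]; exact hmuw
        have hdegw : G.deg w = G.mu w (u i) + ∑ v ∈ Finset.univ.erase (u i), G.mu w v := by
          rw [Finset.add_sum_erase _ _ (Finset.mem_univ (u i))]
          rfl
        have hdmw : dm m w = m w (u i) + ∑ v ∈ Finset.univ.erase (u i), m w v := by
          rw [Finset.add_sum_erase _ _ (Finset.mem_univ (u i))]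
          rfl
        have hsum_le : ∑ v ∈ Finset.univ.erase (u i), m w v ≤
            ∑ v ∈ Finset.univ.erase (u i), G.mu w v :=
          Finset.sum_le_sum (fun v _ => hmle w v)
        have hdegw_le : G.deg w ≤ G.maxDeg := Finset.le_sup (Finset.mem_univ w)
        have hdmw_eq : dm m w = G.maxDeg := hwT.2
        have hmw : t + 1 ≤ m w (u i) := by omega
        have h1u : 1 ≤ dm m (u i) := by
          have h1' : 1 ≤ m (u i) w := by rw [hm (u i) w]; omega
          exact le_trans h1' (Finset.single_le_sum (f := fun v => m (u i) v)
            (fun v _ => Nat.zero_le _) (Finset.mem_univ w))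
        exact ⟨hcu, h1u⟩
      · -- w = u i
        have hw : w = u i := hw2
        rw [← hw]
        refine ⟨hwT.1, ?_⟩
        rw [hwT.2]
        exact hmax1
      · exact absurd hw3 hwnotSi
    obtain ⟨z₁, z₂, hne, ⟨hadj₁, hT₁⟩, ⟨hadj₂, hT₂⟩⟩ := hD4 (u i) hcoreu.1 hcoreu.2
    -- both z₁ z₂ lie in S (i+1) \ (S i ∪ {u i})
    have hzmem : ∀ z, B.Adj (u i) z → T z → z ∈ S (i + 1) \ (S i ∪ {u i}) := by
      intro z hadj hTz
      constructor
      · rw [hSdef i hiq]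
        exact Or.inl (Or.inl hadj)
      · rintro (hz | hz)
        · exact hSi ⟨z, hz, hTz⟩
        · exact B.ne_of_adj hadj (by rw [Set.mem_singleton_iff] at hz; exact hz.symm)
    have hlt : 1 < (S (i + 1) \ (S i ∪ {u i})).ncard := by
      rw [Set.one_lt_ncard_iff (Set.toFinite _)]
      exact ⟨z₁, z₂, hzmem z₁ hadj₁ hT₁, hzmem z₂ hadj₂ hT₂, hne⟩
    have := hSone i hiq
    omega

end BQ

/-- Theorem (B-queue core): if the t-core H of G has multiplicity at most t+1 and the
simple graph B of its multiplicity-(t+1) edges has a full B-queue, then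
χ'(G) ≤ Δ(G) + t. -/
theorem stmt1 {V : Type*} [Fintype V] (G : Multigraph V) (t : ℕ)
    (H : Multigraph V) (hH : H = G.tCore t)
    (hmul : ∀ u v, H.mu u v ≤ t + 1)
    (B : SimpleGraph V) (hB : ∀ u v, B.Adj u v ↔ H.mu u v = t + 1)
    (hq : HasFullBQueue B) :
    G.chromaticIndex ≤ G.maxDeg + t := by
  letI := Classical.decEq V
  subst hH
  obtain ⟨c, hc⟩ := BQ.main G t hmul B hB hq (∑ v, BQ.dm G.mu v) G.mu G.symm
    (fun u v => le_refl _) (le_refl _)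
  refine Nat.sInf_le ?_
  refine ⟨fun i u v => if i ∈ c u v then 1 else 0, ?_, ?_, ?_, ?_⟩
  · intro i u v
    simp only []
    rw [hc.symm u v]
  · intro i u v
    simp only []
    split <;> omega
  · intro i v
    simp only []
    rw [← Finset.card_filter]
    refine Finset.card_le_one.2 ?_
    intro a ha b hb
    rw [Finset.mem_filter] at ha hb
    exact BQ.row_unique hc ha.2 hb.2
  · intro u v
    simp only []
    rw [← Finset.card_filter]
    have he : Finset.univ.filter (fun i => i ∈ c u v) = c u v := by
      ext i
      simp
    rw [he]
    exact hc.card u v
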